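/- A τ-Vickrey mechanism combined with the no-trade satisfies strategy-proofness if and only if the winner selection function τ satisfies uncompromisingness (i.e., for each profile v, each i ∈ τ(v), and each v'_i with v'_i > v^{m+1}, we have i ∈ τ(v'_i,v_{-i})). -/

import Mathlib

open scoped NNReal
open Finset

noncomputable section

/-- The `k`-th highest valuation (1-indexed); junk value `0` if `k` is out of range. -/
def vk (n k : ℕ) (v : Fin n → ℝ≥0) : ℝ≥0 :=
  if h : 0 < k ∧ k ≤ n then v (Tuple.sort v ⟨n - k, by omega⟩) else 0

/-- `v ∈ Ṽ` : the `(m+1)`-th through `n`-th highest valuations are all equal. -/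
def tilde (n m : ℕ) (v : Fin n → ℝ≥0) : Prop :=
  ∀ k, m + 1 ≤ k → k ≤ n → vk n k v = vk n (m + 1) v

/-- A mechanism: object assignment and transfers, allocating at most `m` objects. -/
structure Mechanism (n m : ℕ) where
  x : (Fin n → ℝ≥0) → Fin n → Bool
  t : (Fin n → ℝ≥0) → Fin n → ℝ
  feasible : ∀ v, (Finset.univ.filter fun i => x v i = true).card ≤ m

/-- Quasi-linear utility of a bundle `(x, t)` for valuation `w`. -/
def util (z : Bool × ℝ) (w : ℝ≥0) : ℝ := (if z.1 then (w : ℝ) else 0) - z.2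

def Mechanism.bundle {n m : ℕ} (f : Mechanism n m) (v : Fin n → ℝ≥0) (i : Fin n) :
    Bool × ℝ := (f.x v i, f.t v i)

def IR {n m : ℕ} (f : Mechanism n m) : Prop :=
  ∀ v i, 0 ≤ util (f.bundle v i) (v i)

def NoSubsidy {n m : ℕ} (f : Mechanism n m) : Prop :=
  ∀ v i, 0 ≤ f.t v i

def StrategyProof {n m : ℕ} (f : Mechanism n m) : Prop :=
  ∀ v (i : Fin n) (w : ℝ≥0),
    util (f.bundle (Function.update v i w) i) (v i) ≤ util (f.bundle v i) (v i)

def EgalitarianEquivalent {n m : ℕ} (f : Mechanism n m) : Prop :=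
  ∀ v, ∃ z₀ : Bool × ℝ, ∀ i, util (f.bundle v i) (v i) = util z₀ (v i)

def EnvyFree {n m : ℕ} (f : Mechanism n m) : Prop :=
  ∀ v i j, util (f.bundle v j) (v i) ≤ util (f.bundle v i) (v i)

/-- `x` maximizes total valuation among feasible object allocations. -/
def EffAlloc (n m : ℕ) (v : Fin n → ℝ≥0) (x : Fin n → Bool) : Prop :=
  ∀ y : Fin n → Bool, (Finset.univ.filter fun i => y i = true).card ≤ m →
    (∑ i, if y i then (v i : ℝ) else 0) ≤ ∑ i, if x i then (v i : ℝ) else 0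

def Efficient {n m : ℕ} (f : Mechanism n m) : Prop :=
  ∀ v, EffAlloc n m v (f.x v)

/-- Non-obvious manipulability: no report improves the sup or the inf (over others'
valuations) of an agent's utility compared to truth-telling. -/
def NOM {n m : ℕ} (f : Mechanism n m) : Prop :=
  ∀ (i : Fin n) (vi vi' : ℝ≥0),
    (⨆ w : Fin n → ℝ≥0, util (f.bundle (Function.update w i vi') i) vi) ≤
      (⨆ w : Fin n → ℝ≥0, util (f.bundle (Function.update w i vi) i) vi) ∧
    (⨅ w : Fin n → ℝ≥0, util (f.bundle (Function.update w i vi') i) vi) ≤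
      (⨅ w : Fin n → ℝ≥0, util (f.bundle (Function.update w i vi) i) vi)

/-- Winner selection function. -/
structure WSF (n m : ℕ) where
  τ : (Fin n → ℝ≥0) → Finset (Fin n)
  empty_of_not_tilde : ∀ v, ¬ tilde n m v → τ v = ∅
  mem_le : ∀ v i, i ∈ τ v → vk n (m + 1) v ≤ v i
  mem_of_lt : ∀ v, τ v ≠ ∅ → ∀ i, vk n (m + 1) v < v i → i ∈ τ v
  card_le : ∀ v, (τ v).card ≤ m

def Uncompromising {n m : ℕ} (T : WSF n m) : Prop :=
  ∀ v (i : Fin n) (w : ℝ≥0), i ∈ T.τ v → vk n (m + 1) v < w →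
    i ∈ T.τ (Function.update v i w)

/-- `f` is the `τ`-Vickrey mechanism combined with the no-trade. -/
def IsTauVickrey {n m : ℕ} (f : Mechanism n m) (T : WSF n m) : Prop :=
  ∀ v i, (f.x v i = true ↔ i ∈ T.τ v) ∧
    f.t v i = if i ∈ T.τ v then (vk n (m + 1) v : ℝ) else 0

/-- An efficient-Vickrey allocation at `v`: efficient object allocation, winners pay
the `(m+1)`-th highest valuation, losers pay nothing. -/
def IsEVAlloc (n m : ℕ) (v : Fin n → ℝ≥0) (z : Fin n → Bool × ℝ) : Prop :=
  (Finset.univ.filter fun i => (z i).1 = true).card ≤ m ∧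
  EffAlloc n m v (fun i => (z i).1) ∧
  ∀ i, (z i).2 = if (z i).1 then (vk n (m + 1) v : ℝ) else 0

/-- A pay-as-bid allocation at `v`: efficient object allocation, winners pay their
own valuation, losers pay nothing. -/
def IsPABAlloc (n m : ℕ) (v : Fin n → ℝ≥0) (z : Fin n → Bool × ℝ) : Prop :=
  (Finset.univ.filter fun i => (z i).1 = true).card ≤ m ∧
  EffAlloc n m v (fun i => (z i).1) ∧
  ∀ i, (z i).2 = if (z i).1 then (v i : ℝ) else 0

/-- The Vickrey mechanism: winners are exactly the agents with `v i > v^{m+1}`,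
winners pay `v^{m+1}`, losers get and pay nothing. -/
def IsVickrey {n m : ℕ} (f : Mechanism n m) : Prop :=
  ∀ v i, (f.x v i = true ↔ vk n (m + 1) v < v i) ∧
    f.t v i = if f.x v i then (vk n (m + 1) v : ℝ) else 0

/-- The efficient Vickrey mechanism combined with a pay-as-bid. -/
def IsEVPAB {n m : ℕ} (f : Mechanism n m) : Prop :=
  ∀ v, (tilde n m v → IsEVAlloc n m v (f.bundle v)) ∧
    (¬ tilde n m v → IsPABAlloc n m v (f.bundle v))

/-- The class `F` of mechanisms. -/
def MemF {n m : ℕ} (f : Mechanism n m) : Prop :=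
  EgalitarianEquivalent f ∧ NOM f ∧ Efficient f ∧ IR f ∧ NoSubsidy f


lemma vk_le_of_card (n m : ℕ) (hmn : m < n) (v : Fin n → ℝ≥0) (c : ℝ≥0)
    (hc : (univ.filter fun j => c < v j).card ≤ m) : vk n (m + 1) v ≤ c := by
  by_contra hlt
  push_neg at hlt
  rw [vk, dif_pos ⟨Nat.succ_pos m, hmn⟩] at hlt
  have key : (Finset.Ici (⟨n - (m+1), by omega⟩ : Fin n)).card ≤
      (univ.filter fun j => c < v j).card := by
    apply Finset.card_le_card_of_injOn (Tuple.sort v)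
    · intro t ht
      simp only [Finset.mem_coe, Finset.mem_Ici] at ht
      simp only [Finset.mem_coe, Finset.mem_filter, Finset.mem_univ, true_and]
      exact lt_of_lt_of_le hlt (Tuple.monotone_sort v ht)
    · exact fun a _ b _ h => (Tuple.sort v).injective h
  rw [Fin.card_Ici] at key
  simp only at key
  omega

theorem stmt5 (n m : ℕ) (hmn : m < n) (f : Mechanism n m) (T : WSF n m)
    (hfT : IsTauVickrey f T) :
    StrategyProof f ↔ Uncompromising T := by
  have hx : ∀ v i, f.x v i = true ↔ i ∈ T.τ v := fun v i => (hfT v i).1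
  have ht : ∀ v i, f.t v i = if i ∈ T.τ v then (vk n (m + 1) v : ℝ) else 0 :=
    fun v i => (hfT v i).2
  constructor
  · -- SP → Uncompromising
    intro hSP v i w hiv hw
    set v' := Function.update v i w with hv'
    have hvv : Function.update v' i (v i) = v := by
      rw [hv', Function.update_idem, Function.update_eq_self]
    have hsp := hSP v' i (v i)
    rw [hvv] at hsp
    by_contra hnot
    have hxv : f.x v i = true := (hx v i).2 hiv
    have hxv' : f.x v' i = false := by
      by_contra hh
      exact hnot ((hx v' i).1 (by simpa using hh))
    have hv'i : v' i = w := Function.update_self i w v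
    rw [hv'i] at hsp
    simp only [util, Mechanism.bundle, hxv, hxv', ht, hiv, if_true, if_pos hiv,
      Bool.false_eq_true, if_false, if_neg hnot] at hsp
    have : (w : ℝ) - vk n (m + 1) v ≤ 0 := by linarith
    have hwp : (vk n (m + 1) v : ℝ) < (w : ℝ) := NNReal.coe_lt_coe.2 hw
    linarith
  · -- Uncompromising → SP
    intro hU v i w
    set v' := Function.update v i w with hv'
    have hvv : Function.update v' i (v i) = v := by
      rw [hv', Function.update_idem, Function.update_eq_self]
    have hv'i : v' i = w := Function.update_self i w v
    have hRHS : 0 ≤ util (f.bundle v i) (v i) := by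
      by_cases hi : i ∈ T.τ v
      · have hle : vk n (m + 1) v ≤ v i := T.mem_le v i hi
        simp only [util, Mechanism.bundle, (hx v i).2 hi, ht, if_pos hi, if_true]
        have := NNReal.coe_le_coe.2 hle
        linarith
      · have hxv : f.x v i = false := by
          by_contra hh
          exact hi ((hx v i).1 (by simpa using hh))
        simp [util, Mechanism.bundle, hxv, ht, hi]
    by_cases h' : i ∈ T.τ v'
    · have hLHS : util (f.bundle v' i) (v i) = (v i : ℝ) - vk n (m + 1) v' := by
        simp [util, Mechanism.bundle, (hx v' i).2 h', ht, h']
      set p' := vk n (m + 1) v' with hp'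
      by_cases hi : i ∈ T.τ v
      · -- need vk n (m+1) v ≤ p'
        have hne : T.τ v' ≠ ∅ := Finset.ne_empty_of_mem h'
        have hcard : (univ.filter fun j => p' < v j).card ≤ m := by
          refine le_trans (Finset.card_le_card ?_) (T.card_le v')
          intro j hj
          simp only [Finset.mem_filter, Finset.mem_univ, true_and] at hj
          by_cases hji : j = i
          · exact hji ▸ h'
          · refine T.mem_of_lt v' hne j ?_
            rwa [hv', Function.update_of_ne hji]
        have hpp' : vk n (m + 1) v ≤ p' := vk_le_of_card n m hmn v p' hcard
        have hRHSeq : util (f.bundle v i) (v i) = (v i : ℝ) - vk n (m + 1) v := by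
          simp [util, Mechanism.bundle, (hx v i).2 hi, ht, hi]
        rw [hLHS, hRHSeq]
        have := NNReal.coe_le_coe.2 hpp'
        linarith
      · -- need v i ≤ p'
        have hvle : v i ≤ p' := by
          by_contra hh
          push_neg at hh
          have := hU v' i (v i) h' hh
          rw [hvv] at this
          exact hi this
        rw [hLHS]
        have := NNReal.coe_le_coe.2 hvle
        linarith
    · have hxv' : f.x v' i = false := by
        by_contra hh
        exact h' ((hx v' i).1 (by simpa using hh))
      have hLHS : util (f.bundle v' i) (v i) = 0 := by
        simp [util, Mechanism.bundle, hxv', ht, h']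
      rw [hLHS]
      exact hRHS


end
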